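/- Let (Ω,Σ) be a measurable space, A a nonempty finite set equipped with the discrete σ-algebra, and B a nonempty compact metric space equipped with its Borel σ-algebra. Let g : Ω × A × B → ℝ be such that x ↦ g(x,α,β) is measurable for every (α,β) ∈ A × B and β ↦ g(x,α,β) is continuous on B for every (x,α) ∈ Ω × A. Then there exists a function β^g : Ω × A → B, measurable with respect to the product σ-algebra on Ω × A, such that g(x,α,β^g(x,α)) = min_{β∈B} g(x,α,β) for all (x,α) ∈ Ω × A. -/

import Mathlib

open Metric Set Filter Topology

/-- Measurable minimum-value function over a nonempty compact metric space. -/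
lemma minval {Ω : Type*} [MeasurableSpace Ω]
    {B : Type*} [MetricSpace B] [CompactSpace B] [Nonempty B]
    (f : Ω → B → ℝ) (hm : ∀ β, Measurable (fun x => f x β)) (hc : ∀ x, Continuous (f x)) :
    ∃ h : Ω → ℝ, Measurable h ∧ ∀ x, (∃ β, f x β = h x) ∧ ∀ β, h x ≤ f x β := by
  have hsep : TopologicalSpace.SeparableSpace B := by
    rw [← TopologicalSpace.isSeparable_univ_iff]
    exact isCompact_univ.isSeparable
  obtain ⟨c, hc_dense⟩ := TopologicalSpace.exists_dense_seq B
  refine ⟨fun x => ⨅ n, f x (c n), Measurable.iInf (fun n => hm (c n)), fun x => ?_⟩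
  obtain ⟨β₀, -, hβ₀'⟩ := isCompact_univ.exists_isMinOn univ_nonempty
    (hc x).continuousOn
  have hβ₀ : ∀ β, β ∈ (Set.univ : Set B) → f x β₀ ≤ f x β := fun β _ => hβ₀' (mem_univ β)
  have hbdd : BddBelow (Set.range fun n => f x (c n)) :=
    ⟨f x β₀, by rintro r ⟨n, rfl⟩; exact hβ₀ _ trivial⟩
  have hge : f x β₀ ≤ ⨅ n, f x (c n) := le_ciInf fun n => hβ₀ _ trivial
  have hle : (⨅ n, f x (c n)) ≤ f x β₀ := by
    refine le_of_forall_pos_le_add fun ε hε => ?_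
    obtain ⟨δ, hδ, hδε⟩ := Metric.continuous_iff.1 (hc x) β₀ ε hε
    obtain ⟨n, hn⟩ := hc_dense.exists_dist_lt β₀ hδ
    calc (⨅ n, f x (c n)) ≤ f x (c n) := ciInf_le hbdd n
      _ ≤ f x β₀ + ε := by
        have := hδε (c n) (by rwa [dist_comm] at hn)
        rw [Real.dist_eq, abs_sub_lt_iff] at this
        linarith [this.1]
  exact ⟨⟨β₀, le_antisymm hge hle⟩, fun β => hle.trans (hβ₀ β trivial)⟩

/-- Measurable selection of minimizers over a nonempty compact metric space. -/
lemma minsel {Ω : Type*} [MeasurableSpace Ω]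
    {B : Type*} [MetricSpace B] [CompactSpace B] [Nonempty B]
    [MeasurableSpace B] [BorelSpace B]
    (f : Ω → B → ℝ) (hm : ∀ β, Measurable (fun x => f x β)) (hc : ∀ x, Continuous (f x)) :
    ∃ s : Ω → B, Measurable s ∧ ∀ x β, f x (s x) ≤ f x β := by
  classical
  obtain ⟨m, m_meas, hmx⟩ := minval f hm hc
  have hsep : TopologicalSpace.SeparableSpace B := by
    rw [← TopologicalSpace.isSeparable_univ_iff]
    exact isCompact_univ.isSeparable
  obtain ⟨b, hb_dense⟩ := TopologicalSpace.exists_dense_seq B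
  -- the target sets: T k n = points x for which a minimizer exists in ball of radius (1/2)^k
  -- around b n
  -- measurable min value over a fixed nonempty closed set
  have key : ∀ K : Set B, IsClosed K →
      MeasurableSet {x | ∃ β ∈ K, f x β = m x} := by
    intro K hKcl
    rcases eq_empty_or_nonempty K with rfl | hKne
    · simp
    have hKcomp : IsCompact K := hKcl.isCompact
    have : CompactSpace K := isCompact_iff_compactSpace.1 hKcomp
    have : Nonempty K := hKne.to_subtype
    obtain ⟨h, h_meas, hh⟩ := minval (fun x (β : K) => f x β.1)
      (fun β => hm β.1) (fun x => (hc x).comp continuous_subtype_val)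
    have : {x | ∃ β ∈ K, f x β = m x} = {x | h x ≤ m x} := by
      ext x
      constructor
      · rintro ⟨β, hβK, hβ⟩
        exact le_of_le_of_eq ((hh x).2 ⟨β, hβK⟩) hβ
      · intro hx
        obtain ⟨β, hβ⟩ := (hh x).1
        exact ⟨β.1, β.2, le_antisymm (hβ ▸ hx) ((hmx x).2 β.1)⟩
    rw [this]
    exact measurableSet_le h_meas m_meas
  -- goodness of an index function at scale (1/2)^k
  set r : ℕ → ℝ := fun k => (2 : ℝ)⁻¹ ^ k with hr
  have hrpos : ∀ k, 0 < r k := fun k => pow_pos (by norm_num) k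
  have good_def : ∀ (k : ℕ) (nf : Ω → ℕ), Prop := fun _ _ => True
  -- base step
  have base : ∃ nf : Ω → ℕ, Measurable nf ∧
      ∀ x, ∃ β ∈ closedBall (b (nf x)) (r 0), f x β = m x := by
    have hex : ∀ x, ∃ n, ∃ β ∈ closedBall (b n) (r 0), f x β = m x := by
      intro x
      obtain ⟨β₀, hβ₀⟩ := (hmx x).1
      obtain ⟨n, hn⟩ := hb_dense.exists_dist_lt β₀ (hrpos 0)
      exact ⟨n, β₀, mem_closedBall.2 hn.le, hβ₀⟩
    refine ⟨fun x => Nat.find (hex x), measurable_find hex fun n => ?_, fun x => Nat.find_spec (hex x)⟩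
    exact key _ isClosed_closedBall
  -- inductive step
  have step : ∀ (k : ℕ) (nf : Ω → ℕ), Measurable nf →
      (∀ x, ∃ β ∈ closedBall (b (nf x)) (r k), f x β = m x) →
      ∃ nf' : Ω → ℕ, Measurable nf' ∧
        (∀ x, ∃ β ∈ closedBall (b (nf' x)) (r (k+1)), f x β = m x) ∧
        ∀ x, dist (b (nf' x)) (b (nf x)) ≤ r k + r (k+1) := by
    intro k nf nf_meas nf_good
    set p : ℕ → Ω → Prop := fun n x =>
      ∃ β ∈ closedBall (b n) (r (k+1)) ∩ closedBall (b (nf x)) (r k), f x β = m x with hp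
    have hex : ∀ x, ∃ n, p n x := by
      intro x
      obtain ⟨β, hβball, hβ⟩ := nf_good x
      obtain ⟨n, hn⟩ := hb_dense.exists_dist_lt β (hrpos (k+1))
      exact ⟨n, β, ⟨mem_closedBall.2 hn.le, hβball⟩, hβ⟩
    have pmeas : ∀ n, MeasurableSet {x | p n x} := by
      intro n
      have : {x | p n x} = ⋃ j, ({x | nf x = j} ∩
          {x | ∃ β ∈ closedBall (b n) (r (k+1)) ∩ closedBall (b j) (r k), f x β = m x}) := by
        ext x
        simp only [mem_iUnion, mem_inter_iff, mem_setOf_eq]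
        constructor
        · intro hx; exact ⟨nf x, rfl, hx⟩
        · rintro ⟨j, hj, hx⟩; rw [hp]; simp only [hj]; exact hx
      rw [this]
      exact MeasurableSet.iUnion fun j => (nf_meas (measurableSet_singleton j)).inter
        (key _ (isClosed_closedBall.inter isClosed_closedBall))
    refine ⟨fun x => Nat.find (hex x), measurable_find hex pmeas, fun x => ?_, fun x => ?_⟩
    · obtain ⟨β, ⟨h1, _⟩, hβ⟩ := Nat.find_spec (hex x)
      exact ⟨β, h1, hβ⟩
    · obtain ⟨β, ⟨h1, h2⟩, _⟩ := Nat.find_spec (hex x)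
      calc dist (b (Nat.find (hex x))) (b (nf x)) ≤ dist (b (Nat.find (hex x))) β + dist β (b (nf x)) :=
            dist_triangle _ _ _
        _ ≤ r (k+1) + r k := add_le_add (by rw [dist_comm]; exact mem_closedBall.1 h1) h2
        _ = r k + r (k+1) := by ring
  -- build the sequence of index functions by recursion, with choice
  choose! step_nf step_meas step_inv step_dist using step
  set P : ℕ → (Ω → ℕ) → Prop := fun k nf => Measurable nf ∧
      ∀ x, ∃ β ∈ closedBall (b (nf x)) (r k), f x β = m x with hP
  let F : ∀ k : ℕ, {nf : Ω → ℕ // P k nf} := fun k =>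
    Nat.rec ⟨base.choose, base.choose_spec.1, base.choose_spec.2⟩
      (fun k ih => ⟨step_nf k ih.1,
        step_meas k ih.1 ih.2.1 ih.2.2, step_inv k ih.1 ih.2.1 ih.2.2⟩) k
  have Fdist : ∀ k x, dist (b ((F (k+1)).1 x)) (b ((F k).1 x)) ≤ r k + r (k+1) :=
    fun k x => step_dist k (F k).1 (F k).2.1 (F k).2.2 x
  set βk : ℕ → Ω → B := fun k x => b ((F k).1 x) with hβk
  have βk_meas : ∀ k, Measurable (βk k) := fun k =>
    measurable_from_top.comp (F k).2.1
  have hdist2 : ∀ x k, dist (βk k x) (βk (k+1) x) ≤ 2 * (2⁻¹ : ℝ) ^ k := by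
    intro x k
    rw [dist_comm]
    refine (Fdist k x).trans ?_
    have : r (k+1) ≤ r k := by
      rw [hr]
      exact pow_le_pow_of_le_one (by norm_num) (by norm_num) (Nat.le_succ k)
    simp only [hr] at this ⊢
    linarith
  have hcauchy : ∀ x, CauchySeq (fun k => βk k x) := by
    intro x
    exact cauchySeq_of_le_geometric 2⁻¹ 2 (by norm_num) (hdist2 x)
  have htend : ∀ x, ∃ β, Tendsto (fun k => βk k x) atTop (𝓝 β) :=
    fun x => cauchySeq_tendsto_of_complete (hcauchy x)
  refine ⟨fun x => (htend x).choose, ?_, ?_⟩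
  · exact measurable_of_tendsto_metrizable βk_meas
      (tendsto_pi_nhds.2 fun x => (htend x).choose_spec)
  · intro x β
    set sx := (htend x).choose with hsx
    have hs_tend : Tendsto (fun k => βk k x) atTop (𝓝 sx) := (htend x).choose_spec
    -- choose approximate minimizers
    have hμ : ∀ k, ∃ μ ∈ closedBall (βk k x) (r k), f x μ = m x := fun k => (F k).2.2 x
    choose μ hμball hμval using hμ
    have hμ_tend : Tendsto μ atTop (𝓝 sx) := by
      rw [tendsto_iff_dist_tendsto_zero]
      have hub : ∀ k, dist (μ k) sx ≤ r k + dist (βk k x) sx := fun k =>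
        (dist_triangle (μ k) (βk k x) sx).trans
          (add_le_add (mem_closedBall.1 (hμball k)) le_rfl)
      have h1 : Tendsto (fun k => r k + dist (βk k x) sx) atTop (𝓝 0) := by
        have hr0 : Tendsto r atTop (𝓝 0) :=
          tendsto_pow_atTop_nhds_zero_of_lt_one (by norm_num) (by norm_num)
        have hd0 : Tendsto (fun k => dist (βk k x) sx) atTop (𝓝 0) :=
          tendsto_iff_dist_tendsto_zero.1 hs_tend
        simpa using hr0.add hd0
      exact squeeze_zero (fun k => dist_nonneg) hub h1
    have : Tendsto (fun k => f x (μ k)) atTop (𝓝 (f x sx)) :=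
      ((hc x).continuousAt.tendsto.comp hμ_tend)
    have hfs : f x sx = m x := by
      have hconst : Tendsto (fun k => f x (μ k)) atTop (𝓝 (m x)) := by
        simp only [hμval]; exact tendsto_const_nhds
      exact tendsto_nhds_unique this hconst
    rw [hfs]
    exact (hmx x).2 β

/-- Measurable selection of pointwise minimizers: if `g : Ω × A × B → ℝ` is measurable in
`x` and continuous in `β`, with `A` nonempty finite (discrete σ-algebra) and `B` a nonempty
compact metric space (Borel σ-algebra), then there is a jointly measurable
`βg : Ω × A → B` with `g x α (βg (x,α)) = min_β g x α β` for all `(x,α)`. -/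
theorem stmt3 {Ω : Type*} [MeasurableSpace Ω]
    {A : Type*} [Fintype A] [Nonempty A] [MeasurableSpace A] [MeasurableSingletonClass A]
    {B : Type*} [MetricSpace B] [CompactSpace B] [Nonempty B]
    [MeasurableSpace B] [BorelSpace B]
    (g : Ω → A → B → ℝ)
    (hmeas : ∀ α β, Measurable (fun x => g x α β))
    (hcont : ∀ x α, Continuous (g x α)) :
    ∃ βg : Ω × A → B, Measurable βg ∧
      ∀ (x : Ω) (α : A) (β : B), g x α (βg (x, α)) ≤ g x α β := by
  have h : ∀ α : A, ∃ s : Ω → B, Measurable s ∧ ∀ x β, g x α (s x) ≤ g x α β :=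
    fun α => minsel (fun x β => g x α β) (hmeas α) (fun x => hcont x α)
  choose s s_meas s_min using h
  exact ⟨fun p => s p.2 p.1, measurable_from_prod_countable_left (fun α => s_meas α),
    fun x α β => s_min α x β⟩
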